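/- For all factor indices k₁, k₂ ∈ {1,…,r}, the cross-covariance matrix between the half-vectorized scores 𝒟_{q_{k₁}}ᵀ·s_{k₁} and 𝒟_{q_{k₂}}ᵀ·s_{k₂} equals Cov(𝒟_{q_{k₁}}ᵀ·s_{k₁}, 𝒟_{q_{k₂}}ᵀ·s_{k₂}) = (1/2)·𝒟_{q_{k₁}}ᵀ·[ ∑_{i=1}^{l_{k₁}} ∑_{j=1}^{l_{k₂}} ( Z_{(k₁,i)}ᵀ·V⁻¹·Z_{(k₂,j)} ) ⊗ ( Z_{(k₁,i)}ᵀ·V⁻¹·Z_{(k₂,j)} ) ]·𝒟_{q_{k₂}}, where ⊗ denotes the Kronecker product of matrices. -/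

import Mathlib

open Matrix MeasureTheory ProbabilityTheory

/-- Column-major vectorization of a matrix: the entry of `vec A` at index `(j, i)`
(column `j`, row `i`) is `A i j`. -/
def vec {α β R : Type*} (A : Matrix α β R) : β × α → R := fun p => A p.2 p.1

/-- Index type for the half-vectorization of a `q × q` matrix: pairs `(j, i)`
(column `j`, row `i`) lying on or below the diagonal, i.e. with `j ≤ i`. -/
abbrev VechIdx (q : ℕ) := { p : Fin q × Fin q // p.1 ≤ p.2 }

/-- Half-vectorization: stacks the entries of `A` on and below the diagonal column by column. -/
def vech {R : Type*} {q : ℕ} (A : Matrix (Fin q) (Fin q) R) : VechIdx q → R :=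
  fun p => A p.1.2 p.1.1

/-- The duplication matrix `𝒟_q`: the unique `q² × (q(q+1)/2)` matrix with
`𝒟_q · vech A = vec A` for every symmetric `q × q` matrix `A`. -/
def dup (q : ℕ) : Matrix (Fin q × Fin q) (VechIdx q) ℝ := fun v w =>
  if (v.1 = w.1.1 ∧ v.2 = w.1.2) ∨ (v.1 = w.1.2 ∧ v.2 = w.1.1) then 1 else 0

/-- The commutation matrix `K_{q,q}`: the unique `q² × q²` matrix with
`K_{q,q} · vec A = vec Aᵀ` for every `q × q` matrix `A`. -/
def commMat (q : ℕ) : Matrix (Fin q × Fin q) (Fin q × Fin q) ℝ := fun a b =>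
  if a.1 = b.2 ∧ a.2 = b.1 then 1 else 0

/-- The symmetrization matrix `N_q = (1/2)(I_{q²} + K_{q,q})`. -/
noncomputable def Nmat (q : ℕ) : Matrix (Fin q × Fin q) (Fin q × Fin q) ℝ :=
  (1 / 2 : ℝ) • (1 + commMat q)

/-- The unique symmetric matrix whose half-vectorization is `v`. -/
def unvech {q : ℕ} (v : VechIdx q → ℝ) : Matrix (Fin q) (Fin q) ℝ := fun i j =>
  if h : j ≤ i then v ⟨(j, i), h⟩ else v ⟨(i, j), le_of_not_ge h⟩


open MeasureTheory ProbabilityTheory Real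

noncomputable def Jg (m : ℕ) : ℝ := ∫ x : ℝ, x ^ m * Real.exp (-(1/2 : ℝ) * x ^ 2)

lemma integrable_pow_mul_gexp (m : ℕ) :
    Integrable (fun x : ℝ => x ^ m * Real.exp (-(1/2 : ℝ) * x ^ 2)) := by
  have := integrable_rpow_mul_exp_neg_mul_sq (b := 1/2) (by norm_num) (s := (m : ℝ))
    (by have := Nat.cast_nonneg (α := ℝ) m; linarith)
  simpa [Real.rpow_natCast] using this

lemma Jg_rec (m : ℕ) : Jg (m + 2) = (m + 1 : ℝ) * Jg m := by
  have hderiv : ∀ x : ℝ, HasDerivAt (fun x : ℝ => x ^ (m+1) * Real.exp (-(1/2 : ℝ) * x ^ 2))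
      ((m+1 : ℝ) * x ^ m * Real.exp (-(1/2 : ℝ) * x ^ 2)
        - x ^ (m+2) * Real.exp (-(1/2 : ℝ) * x ^ 2)) x := by
    intro x
    have h1 : HasDerivAt (fun x : ℝ => x ^ (m+1)) ((m+1 : ℝ) * x ^ m) x := by
      simpa using hasDerivAt_pow (m+1) x
    have h2 : HasDerivAt (fun x : ℝ => Real.exp (-(1/2 : ℝ) * x ^ 2))
        (Real.exp (-(1/2 : ℝ) * x ^ 2) * (-(1/2 : ℝ) * (2 * x))) x := by
      have hx : HasDerivAt (fun x : ℝ => -(1/2 : ℝ) * x ^ 2) (-(1/2 : ℝ) * (2 * x)) x := by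
        simpa using ((hasDerivAt_pow 2 x).const_mul (-(1/2 : ℝ)))
      exact hx.exp
    have := h1.mul h2
    exact this.congr_deriv (by ring)
  have hint : Integrable (fun x : ℝ => (m+1 : ℝ) * x ^ m * Real.exp (-(1/2 : ℝ) * x ^ 2)
      - x ^ (m+2) * Real.exp (-(1/2 : ℝ) * x ^ 2)) := by
    have h1 := (integrable_pow_mul_gexp m).const_mul (m+1 : ℝ)
    have h2 := integrable_pow_mul_gexp (m+2)
    simpa [mul_assoc, Pi.sub_def] using h1.sub h2
  have hf : Integrable (fun x : ℝ => x ^ (m+1) * Real.exp (-(1/2 : ℝ) * x ^ 2)) :=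
    integrable_pow_mul_gexp (m+1)
  have h0 := integral_eq_zero_of_hasDerivAt_of_integrable hderiv hint hf
  rw [integral_sub (by simpa [mul_assoc] using (integrable_pow_mul_gexp m).const_mul (m+1 : ℝ))
    (integrable_pow_mul_gexp (m+2))] at h0
  have h3 : ∫ x : ℝ, (m+1 : ℝ) * x ^ m * Real.exp (-(1/2 : ℝ) * x ^ 2)
      = (m+1 : ℝ) * Jg m := by
    rw [Jg, ← integral_const_mul]
    congr 1; ext x; ring
  rw [h3] at h0
  have : Jg (m+2) = ∫ x : ℝ, x ^ (m+2) * Real.exp (-(1/2 : ℝ) * x ^ 2) := rfl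
  rw [this]
  linarith

lemma Jg_zero : Jg 0 = Real.sqrt (2 * π) := by
  simp only [Jg, pow_zero, one_mul]
  rw [integral_gaussian (1/2 : ℝ), show (π/(1/2) : ℝ) = 2*π by ring]

lemma Jg_one : Jg 1 = 0 := by
  have hderiv : ∀ x : ℝ, HasDerivAt (fun x : ℝ => -Real.exp (-(1/2 : ℝ) * x ^ 2))
      (x ^ 1 * Real.exp (-(1/2 : ℝ) * x ^ 2)) x := by
    intro x
    have hx : HasDerivAt (fun x : ℝ => -(1/2 : ℝ) * x ^ 2) (-(1/2 : ℝ) * (2 * x)) x := by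
      simpa using ((hasDerivAt_pow 2 x).const_mul (-(1/2 : ℝ)))
    have := hx.exp.neg
    exact this.congr_deriv (by ring)
  have hint : Integrable (fun x : ℝ => x ^ 1 * Real.exp (-(1/2 : ℝ) * x ^ 2)) :=
    integrable_pow_mul_gexp 1
  have hf : Integrable (fun x : ℝ => -Real.exp (-(1/2 : ℝ) * x ^ 2)) := by
    have : Integrable (fun x : ℝ => Real.exp (-(1/2 : ℝ) * x ^ 2)) :=
      integrable_exp_neg_mul_sq (by norm_num)
    exact this.neg
  exact integral_eq_zero_of_hasDerivAt_of_integrable hderiv hint hf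

lemma sqrt_two_pi_pos : (0 : ℝ) < Real.sqrt (2 * π) :=
  Real.sqrt_pos.2 (by positivity)

/-- pdf of standard gaussian -/
lemma gaussianPDFReal_std (x : ℝ) :
    gaussianPDFReal 0 1 x = (Real.sqrt (2 * π))⁻¹ * Real.exp (-(1/2 : ℝ) * x ^ 2) := by
  rw [gaussianPDFReal]
  norm_num
  left
  ring

/-- transfer of integrals to the density -/
lemma integral_gaussianReal_std (g : ℝ → ℝ) :
    ∫ x, g x ∂(gaussianReal 0 1) = ∫ x, gaussianPDFReal 0 1 x * g x := by
  rw [gaussianReal_of_var_ne_zero 0 one_ne_zero]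
  have hmeas : Measurable fun x => (gaussianPDFReal 0 1 x).toNNReal :=
    (measurable_gaussianPDFReal 0 1).real_toNNReal
  have hd : gaussianPDF 0 1 = fun x => ((gaussianPDFReal 0 1 x).toNNReal : ENNReal) := by
    ext x; rw [gaussianPDF]; rfl
  rw [hd, integral_withDensity_eq_integral_smul hmeas g]
  congr 1; ext x
  simp [NNReal.smul_def, smul_eq_mul, Real.coe_toNNReal _ (gaussianPDFReal_nonneg 0 1 x)]

lemma integrable_gaussianReal_iff {g : ℝ → ℝ} :
    Integrable g (gaussianReal 0 1) ↔
      Integrable (fun x => gaussianPDFReal 0 1 x * g x) := by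
  rw [gaussianReal_of_var_ne_zero 0 one_ne_zero]
  have hmeas : Measurable fun x => (gaussianPDFReal 0 1 x).toNNReal :=
    (measurable_gaussianPDFReal 0 1).real_toNNReal
  have hd : gaussianPDF 0 1 = fun x => ((gaussianPDFReal 0 1 x).toNNReal : ENNReal) := by
    ext x; rw [gaussianPDF]; rfl
  rw [hd]
  constructor
  · intro h
    have h2 : Integrable (fun x => (gaussianPDFReal 0 1 x).toNNReal • g x) ℙ :=
      (integrable_withDensity_iff_integrable_smul hmeas).1 h
    refine h2.congr ?_
    filter_upwards with x
    simp [NNReal.smul_def, smul_eq_mul, Real.coe_toNNReal _ (gaussianPDFReal_nonneg 0 1 x)]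
  · intro h
    have h2 : Integrable (fun x => (gaussianPDFReal 0 1 x).toNNReal • g x) ℙ := by
      refine h.congr ?_
      filter_upwards with x
      simp [NNReal.smul_def, smul_eq_mul, Real.coe_toNNReal _ (gaussianPDFReal_nonneg 0 1 x)]
    exact (integrable_withDensity_iff_integrable_smul hmeas).2 h2

lemma integrable_pow_gaussianReal (k : ℕ) :
    Integrable (fun x : ℝ => x ^ k) (gaussianReal 0 1) := by
  rw [integrable_gaussianReal_iff]
  have : Integrable (fun x : ℝ => (Real.sqrt (2*π))⁻¹ * (x ^ k * Real.exp (-(1/2 : ℝ) * x ^ 2))) :=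
    (integrable_pow_mul_gexp k).const_mul _
  refine this.congr ?_
  filter_upwards with x
  rw [gaussianPDFReal_std]
  ring

noncomputable def Gm (k : ℕ) : ℝ := ∫ x, x ^ k ∂(gaussianReal 0 1)

lemma Gm_eq (k : ℕ) : Gm k = (Real.sqrt (2 * π))⁻¹ * Jg k := by
  rw [Gm, integral_gaussianReal_std, Jg, ← integral_const_mul]
  congr 1; ext x
  rw [gaussianPDFReal_std]
  ring

lemma Gm_zero : Gm 0 = 1 := by
  rw [Gm_eq, Jg_zero, inv_mul_cancel₀ (ne_of_gt sqrt_two_pi_pos)]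

lemma Gm_one : Gm 1 = 0 := by rw [Gm_eq, Jg_one, mul_zero]

lemma Gm_two : Gm 2 = 1 := by
  have : Jg 2 = 1 * Jg 0 := by simpa using Jg_rec 0
  rw [Gm_eq, this, one_mul, Jg_zero, inv_mul_cancel₀ (ne_of_gt sqrt_two_pi_pos)]

lemma Gm_three : Gm 3 = 0 := by
  have : Jg 3 = (1+1 : ℝ) * Jg 1 := by simpa using Jg_rec 1
  rw [Gm_eq, this, Jg_one, mul_zero, mul_zero]

lemma Gm_four : Gm 4 = 3 := by
  have h2 : Jg 2 = 1 * Jg 0 := by simpa using Jg_rec 0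
  have h4 : Jg 4 = (2+1 : ℝ) * Jg 2 := by simpa using Jg_rec 2
  rw [Gm_eq, h4, h2, one_mul, Jg_zero]
  rw [mul_comm (2+1 : ℝ), ← mul_assoc, inv_mul_cancel₀ (ne_of_gt sqrt_two_pi_pos)]
  norm_num
section Part2

open MeasureTheory ProbabilityTheory

variable {Ω : Type*} [MeasurableSpace Ω] {μ : Measure Ω} [IsProbabilityMeasure μ]

lemma indep_prod_integral {ι : Type*} {f : ι → Ω → ℝ}
    (hind : iIndepFun f μ) (hmeas : ∀ i, Measurable (f i))
    (hint : ∀ i, Integrable (f i) μ) (s : Finset ι) :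
    Integrable (fun ω => ∏ i ∈ s, f i ω) μ ∧
      (∫ ω, ∏ i ∈ s, f i ω ∂μ) = ∏ i ∈ s, ∫ ω, f i ω ∂μ := by
  classical
  induction s using Finset.induction_on with
  | empty => simp
  | @insert i s hi ih =>
    have hdep : IndepFun (∏ j ∈ s, f j) (f i) μ :=
      hind.indepFun_finset_prod_of_notMem hmeas hi
    have hprod : (∏ j ∈ s, f j) = fun ω => ∏ j ∈ s, f j ω := by
      ext ω; simp
    have hint₁ : Integrable (∏ j ∈ s, f j) μ := by rw [hprod]; exact ih.1
    have hmul : Integrable ((∏ j ∈ s, f j) * f i) μ := hdep.integrable_mul hint₁ (hint i)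
    constructor
    · refine hmul.congr ?_
      filter_upwards with ω
      simp [Finset.prod_insert hi, mul_comm]
    · have h2 := hdep.integral_mul_eq_mul_integral hint₁.aestronglyMeasurable (hint i).aestronglyMeasurable
      calc ∫ ω, ∏ j ∈ insert i s, f j ω ∂μ
          = ∫ ω, ((∏ j ∈ s, f j) * f i) ω ∂μ := by
            congr 1; ext ω; simp [Finset.prod_insert hi, mul_comm]
        _ = (∫ ω, (∏ j ∈ s, f j) ω ∂μ) * ∫ ω, f i ω ∂μ := h2
        _ = (∏ j ∈ s, ∫ ω, f j ω ∂μ) * ∫ ω, f i ω ∂μ := by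
            rw [hprod]; rw [ih.2]
        _ = ∏ j ∈ insert i s, ∫ ω, f j ω ∂μ := by
            rw [Finset.prod_insert hi, mul_comm]

variable {N : ℕ} {u : Ω → Fin N → ℝ}

lemma u_pow_integrable (humeas : ∀ i, Measurable fun ω => u ω i)
    (hulaw : ∀ i, Measure.map (fun ω => u ω i) μ = gaussianReal 0 1)
    (i : Fin N) (k : ℕ) : Integrable (fun ω => u ω i ^ k) μ := by
  have h := integrable_pow_gaussianReal k
  rw [← hulaw i] at h
  have hg : AEStronglyMeasurable (fun x : ℝ => x ^ k)
      (Measure.map (fun ω => u ω i) μ) :=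
    (measurable_id.pow_const k).aestronglyMeasurable
  exact (integrable_map_measure hg (humeas i).aemeasurable).1 h

lemma u_pow_integral (humeas : ∀ i, Measurable fun ω => u ω i)
    (hulaw : ∀ i, Measure.map (fun ω => u ω i) μ = gaussianReal 0 1)
    (i : Fin N) (k : ℕ) : ∫ ω, u ω i ^ k ∂μ = Gm k := by
  have hg : AEStronglyMeasurable (fun x : ℝ => x ^ k)
      (Measure.map (fun ω => u ω i) μ) :=
    (measurable_id.pow_const k).aestronglyMeasurable
  rw [Gm, ← hulaw i, integral_map (humeas i).aemeasurable hg]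

lemma u_mprod (humeas : ∀ i, Measurable fun ω => u ω i)
    (huindep : iIndepFun (fun i ω => u ω i) μ)
    (hulaw : ∀ i, Measure.map (fun ω => u ω i) μ = gaussianReal 0 1)
    (c : Fin N → ℕ) :
    Integrable (fun ω => ∏ i, u ω i ^ c i) μ ∧
      (∫ ω, ∏ i, u ω i ^ c i ∂μ) = ∏ i, Gm (c i) := by
  have hind : iIndepFun (fun i ω => u ω i ^ c i) μ :=
    huindep.comp (fun i (x : ℝ) => x ^ c i) (fun i => measurable_id.pow_const (c i))
  have hmeas : ∀ i, Measurable (fun ω => u ω i ^ c i) :=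
    fun i => (humeas i).pow_const (c i)
  have hint : ∀ i, Integrable (fun ω => u ω i ^ c i) μ :=
    fun i => u_pow_integrable humeas hulaw i (c i)
  obtain ⟨h1, h2⟩ := indep_prod_integral hind hmeas hint Finset.univ
  refine ⟨h1, h2.trans ?_⟩
  exact Finset.prod_congr rfl fun i _ => u_pow_integral humeas hulaw i (c i)

end Part2
section Part3

open MeasureTheory ProbabilityTheory

/-- Kronecker delta as a real number. -/
def Dd {α : Type*} [DecidableEq α] (a b : α) : ℝ := if a = b then 1 else 0

lemma prod_eq_two_points {ι M : Type*} [Fintype ι] [DecidableEq ι] [CommMonoid M]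
    (f : ι → M) (a b : ι) (hab : a ≠ b) (h : ∀ i, i ≠ a → i ≠ b → f i = 1) :
    ∏ i, f i = f a * f b := by
  classical
  rw [← Finset.prod_subset (Finset.subset_univ {a, b})
    (fun i _ hi => h i (fun h1 => hi (by simp [h1])) (fun h2 => hi (by simp [h2])))]
  rw [Finset.prod_pair hab]

lemma prod_pow_ite {N : ℕ} (x : Fin N → ℝ) (m : Fin N) :
    (∏ i, x i ^ (if i = m then 1 else 0)) = x m := by
  have h : ∀ i : Fin N, x i ^ (if i = m then 1 else 0) = if i = m then x i else 1 :=
    fun i => by split <;> simp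
  simp_rw [h]
  simp

lemma mul_eq_prod2 {N : ℕ} (x : Fin N → ℝ) (m n : Fin N) :
    x m * x n = ∏ i, x i ^ ((if i = m then 1 else 0) + (if i = n then 1 else 0)) := by
  simp_rw [pow_add, Finset.prod_mul_distrib, prod_pow_ite]

lemma mul_eq_prod4 {N : ℕ} (x : Fin N → ℝ) (m n p q : Fin N) :
    x m * x n * x p * x q = ∏ i, x i ^ ((if i = m then 1 else 0) + (if i = n then 1 else 0)
      + (if i = p then 1 else 0) + (if i = q then 1 else 0)) := by
  simp_rw [pow_add, Finset.prod_mul_distrib, prod_pow_ite]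

lemma prod_Gm_two {N : ℕ} (m n : Fin N) :
    (∏ i, Gm ((if i = m then 1 else 0) + (if i = n then 1 else 0))) = Dd m n := by
  by_cases h : m = n
  · subst h
    rw [Fintype.prod_eq_single m (fun i hi => by simp [if_neg hi, Gm_zero])]
    simp [Dd, Gm_two]
  · rw [Finset.prod_eq_zero (Finset.mem_univ m) (by simp [if_neg h, Gm_one])]
    simp [Dd, h]

lemma prod_Gm_four {N : ℕ} (m n p q : Fin N) :
    (∏ i, Gm ((if i = m then 1 else 0) + (if i = n then 1 else 0)
      + (if i = p then 1 else 0) + (if i = q then 1 else 0)))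
      = Dd m p * Dd n q + Dd m q * Dd n p + Dd m n * Dd p q := by
  by_cases hmn : m = n
  · subst hmn
    by_cases hmp : m = p
    · subst hmp
      by_cases hmq : m = q
      · subst hmq
        rw [Fintype.prod_eq_single m (fun i hi => by simp [if_neg hi, Gm_zero])]
        simp [Dd, Gm_four]
        norm_num
      · rw [Finset.prod_eq_zero (Finset.mem_univ q)
          (by simp [if_neg (fun h => hmq h.symm : ¬ q = m), Gm_one])]
        simp [Dd, hmq]
    · by_cases hpq : p = q
      · subst hpq
        rw [prod_eq_two_points _ m p hmp
          (fun i h1 h2 => by simp [if_neg h1, if_neg h2, Gm_zero])]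
        simp [if_neg hmp, if_neg (fun h => hmp h.symm : ¬ p = m), Dd, Gm_two, hmp]
      · by_cases hmq : m = q
        · subst hmq
          rw [Finset.prod_eq_zero (Finset.mem_univ p)
            (by simp [if_neg (fun h => hmp h.symm : ¬ p = m), if_neg hpq, Gm_one])]
          have h2 : ¬ p = m := fun h => hmp h.symm
          simp [Dd, hmp, hpq, h2]
        · rw [Finset.prod_eq_zero (Finset.mem_univ q)
            (by simp [if_neg (fun h => hmq h.symm : ¬ q = m),
              if_neg (fun h => hpq h.symm : ¬ q = p), Gm_one])]
          simp [Dd, hmq, hpq]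
  · by_cases hmp : m = p
    · subst hmp
      by_cases hnq : n = q
      · subst hnq
        rw [prod_eq_two_points _ m n hmn
          (fun i h1 h2 => by simp [if_neg h1, if_neg h2, Gm_zero])]
        simp [if_neg hmn, if_neg (fun h => hmn h.symm : ¬ n = m), Dd, Gm_two, hmn]
      · rw [Finset.prod_eq_zero (Finset.mem_univ n)
          (by simp [if_neg (fun h => hmn h.symm : ¬ n = m), if_neg hnq, Gm_one])]
        have h2 : ¬ n = m := fun h => hmn h.symm
        simp [Dd, hmn, hnq, h2]
    · by_cases hmq : m = q
      · subst hmq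
        by_cases hnp : n = p
        · subst hnp
          rw [prod_eq_two_points _ m n hmn
            (fun i h1 h2 => by simp [if_neg h1, if_neg h2, Gm_zero])]
          simp [if_neg hmn, if_neg (fun h => hmn h.symm : ¬ n = m), Dd, Gm_two, hmn]
        · rw [Finset.prod_eq_zero (Finset.mem_univ n)
            (by simp [if_neg (fun h => hmn h.symm : ¬ n = m), if_neg hnp, Gm_one])]
          have h2 : ¬ n = m := fun h => hmn h.symm
          simp [Dd, hmn, hnp, h2]
      · rw [Finset.prod_eq_zero (Finset.mem_univ m)
          (by simp [if_neg hmn, if_neg hmp, if_neg hmq, Gm_one])]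
        simp [Dd, hmn, hmp, hmq]

variable {Ω : Type*} [MeasurableSpace Ω] {μ : Measure Ω} [IsProbabilityMeasure μ]
variable {N : ℕ} {u : Ω → Fin N → ℝ}

lemma u_two_integrable (humeas : ∀ i, Measurable fun ω => u ω i)
    (huindep : iIndepFun (fun i ω => u ω i) μ)
    (hulaw : ∀ i, Measure.map (fun ω => u ω i) μ = gaussianReal 0 1)
    (m n : Fin N) : Integrable (fun ω => u ω m * u ω n) μ := by
  have := (u_mprod humeas huindep hulaw
    (fun i => (if i = m then 1 else 0) + (if i = n then 1 else 0))).1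
  refine this.congr ?_
  filter_upwards with ω
  exact (mul_eq_prod2 (u ω) m n).symm

lemma u_two_integral (humeas : ∀ i, Measurable fun ω => u ω i)
    (huindep : iIndepFun (fun i ω => u ω i) μ)
    (hulaw : ∀ i, Measure.map (fun ω => u ω i) μ = gaussianReal 0 1)
    (m n : Fin N) : ∫ ω, u ω m * u ω n ∂μ = Dd m n := by
  have h := (u_mprod humeas huindep hulaw
    (fun i => (if i = m then 1 else 0) + (if i = n then 1 else 0))).2
  rw [← prod_Gm_two m n, ← h]
  congr 1; ext ω
  exact mul_eq_prod2 (u ω) m n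

lemma u_four_integrable (humeas : ∀ i, Measurable fun ω => u ω i)
    (huindep : iIndepFun (fun i ω => u ω i) μ)
    (hulaw : ∀ i, Measure.map (fun ω => u ω i) μ = gaussianReal 0 1)
    (m n p q : Fin N) : Integrable (fun ω => u ω m * u ω n * u ω p * u ω q) μ := by
  have := (u_mprod humeas huindep hulaw
    (fun i => (if i = m then 1 else 0) + (if i = n then 1 else 0)
      + (if i = p then 1 else 0) + (if i = q then 1 else 0))).1
  refine this.congr ?_
  filter_upwards with ω
  exact (mul_eq_prod4 (u ω) m n p q).symm

lemma u_four_integral (humeas : ∀ i, Measurable fun ω => u ω i)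
    (huindep : iIndepFun (fun i ω => u ω i) μ)
    (hulaw : ∀ i, Measure.map (fun ω => u ω i) μ = gaussianReal 0 1)
    (m n p q : Fin N) : ∫ ω, u ω m * u ω n * u ω p * u ω q ∂μ
      = Dd m p * Dd n q + Dd m q * Dd n p + Dd m n * Dd p q := by
  have h := (u_mprod humeas huindep hulaw
    (fun i => (if i = m then 1 else 0) + (if i = n then 1 else 0)
      + (if i = p then 1 else 0) + (if i = q then 1 else 0))).2
  rw [← prod_Gm_four m n p q, ← h]
  congr 1; ext ω
  exact mul_eq_prod4 (u ω) m n p q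

end Part3
section Part4

open MeasureTheory ProbabilityTheory

lemma sum_delta_pair {nn : ℕ} (f : Fin nn × Fin nn → ℝ) (m c : Fin nn) :
    ∑ mn : Fin nn × Fin nn, f mn * (Dd m mn.1 * Dd c mn.2) = f (m, c) := by
  rw [Fintype.sum_prod_type]
  have h : ∀ p q : Fin nn, f (p, q) * (Dd m p * Dd c q)
      = if p = m then (if q = c then f (p, q) else 0) else 0 := by
    intro p q
    rcases eq_or_ne p m with rfl | hp
    · rcases eq_or_ne q c with rfl | hq
      · simp [Dd]
      · simp [Dd, hq, (Ne.symm hq : ¬ c = q)]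
    · simp [Dd, hp, (Ne.symm hp : ¬ m = p)]
  simp_rw [h]
  simp

lemma sum_delta_pair' {nn : ℕ} (f : Fin nn × Fin nn → ℝ) (m c : Fin nn) :
    ∑ mn : Fin nn × Fin nn, f mn * (Dd m mn.2 * Dd c mn.1) = f (c, m) := by
  rw [Fintype.sum_prod_type]
  have h : ∀ p q : Fin nn, f (p, q) * (Dd m q * Dd c p)
      = if p = c then (if q = m then f (p, q) else 0) else 0 := by
    intro p q
    rcases eq_or_ne p c with rfl | hp
    · rcases eq_or_ne q m with rfl | hq
      · simp [Dd]
      · simp [Dd, hq, (Ne.symm hq : ¬ m = q)]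
    · simp [Dd, hp, (Ne.symm hp : ¬ c = p)]
  simp_rw [h]
  simp

lemma cov_of_repr {Ω : Type*} [MeasurableSpace Ω] (μ : Measure Ω) [IsProbabilityMeasure μ]
    {N : ℕ} {u : Ω → Fin N → ℝ}
    (humeas : ∀ i, Measurable fun ω => u ω i)
    (huindep : iIndepFun (fun i ω => u ω i) μ)
    (hulaw : ∀ i, Measure.map (fun ω => u ω i) μ = gaussianReal 0 1)
    (C1 C2 : Fin N × Fin N → ℝ) (T1 T2 : Ω → ℝ)
    (h1 : ∀ ω, T1 ω = ∑ mn : Fin N × Fin N, C1 mn * (u ω mn.1 * u ω mn.2 - Dd mn.1 mn.2))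
    (h2 : ∀ ω, T2 ω = ∑ mn : Fin N × Fin N, C2 mn * (u ω mn.1 * u ω mn.2 - Dd mn.1 mn.2)) :
    (∫ ω, T1 ω * T2 ω ∂μ) - (∫ ω, T1 ω ∂μ) * (∫ ω, T2 ω ∂μ)
      = (∑ mn : Fin N × Fin N, C1 mn * C2 mn)
        + (∑ mn : Fin N × Fin N, C1 mn * C2 (mn.2, mn.1)) := by
  classical
  have hφint : ∀ mn : Fin N × Fin N,
      Integrable (fun ω => u ω mn.1 * u ω mn.2 - Dd mn.1 mn.2) μ :=
    fun mn => (u_two_integrable humeas huindep hulaw mn.1 mn.2).sub (integrable_const _)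
  have hφzero : ∀ mn : Fin N × Fin N,
      ∫ ω, (u ω mn.1 * u ω mn.2 - Dd mn.1 mn.2) ∂μ = 0 := by
    intro mn
    rw [integral_sub (u_two_integrable humeas huindep hulaw mn.1 mn.2) (integrable_const _),
      u_two_integral humeas huindep hulaw, integral_const]
    simp
  have hφφint : ∀ mn mn' : Fin N × Fin N,
      Integrable (fun ω => (u ω mn.1 * u ω mn.2 - Dd mn.1 mn.2)
        * (u ω mn'.1 * u ω mn'.2 - Dd mn'.1 mn'.2)) μ := by
    intro mn mn'
    have h4 := u_four_integrable humeas huindep hulaw mn.1 mn.2 mn'.1 mn'.2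
    have h2a := (u_two_integrable humeas huindep hulaw mn.1 mn.2).const_mul (Dd mn'.1 mn'.2)
    have h2b := (u_two_integrable humeas huindep hulaw mn'.1 mn'.2).const_mul (Dd mn.1 mn.2)
    have hc := ((h4.sub h2a).sub h2b).add (integrable_const (Dd mn.1 mn.2 * Dd mn'.1 mn'.2))
    refine hc.congr ?_
    filter_upwards with ω
    simp only [Pi.add_apply, Pi.sub_apply]
    ring
  have hφφval : ∀ mn mn' : Fin N × Fin N,
      ∫ ω, (u ω mn.1 * u ω mn.2 - Dd mn.1 mn.2)
        * (u ω mn'.1 * u ω mn'.2 - Dd mn'.1 mn'.2) ∂μ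
      = Dd mn.1 mn'.1 * Dd mn.2 mn'.2 + Dd mn.1 mn'.2 * Dd mn.2 mn'.1 := by
    intro mn mn'
    have h4 := u_four_integrable humeas huindep hulaw mn.1 mn.2 mn'.1 mn'.2
    have h2a := (u_two_integrable humeas huindep hulaw mn.1 mn.2).const_mul (Dd mn'.1 mn'.2)
    have h2b := (u_two_integrable humeas huindep hulaw mn'.1 mn'.2).const_mul (Dd mn.1 mn.2)
    have hrw : (fun ω => (u ω mn.1 * u ω mn.2 - Dd mn.1 mn.2)
        * (u ω mn'.1 * u ω mn'.2 - Dd mn'.1 mn'.2))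
        = fun ω => u ω mn.1 * u ω mn.2 * u ω mn'.1 * u ω mn'.2
          - Dd mn'.1 mn'.2 * (u ω mn.1 * u ω mn.2)
          - Dd mn.1 mn.2 * (u ω mn'.1 * u ω mn'.2)
          + Dd mn.1 mn.2 * Dd mn'.1 mn'.2 := by
      ext ω; ring
    have h2c : Integrable (fun ω => u ω mn.1 * u ω mn.2 * u ω mn'.1 * u ω mn'.2
        - Dd mn'.1 mn'.2 * (u ω mn.1 * u ω mn.2)) μ := h4.sub h2a
    have h2d : Integrable (fun ω => u ω mn.1 * u ω mn.2 * u ω mn'.1 * u ω mn'.2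
        - Dd mn'.1 mn'.2 * (u ω mn.1 * u ω mn.2)
        - Dd mn.1 mn.2 * (u ω mn'.1 * u ω mn'.2)) μ := h2c.sub h2b
    rw [hrw, integral_add h2d (integrable_const _),
      integral_sub h2c h2b, integral_sub h4 h2a, integral_const,
      u_four_integral humeas huindep hulaw, integral_const_mul, integral_const_mul,
      u_two_integral humeas huindep hulaw, u_two_integral humeas huindep hulaw]
    simp
    ring
  have hE1 : ∫ ω, T1 ω ∂μ = 0 := by
    simp_rw [h1]
    rw [integral_finset_sum _ (fun mn _ => (hφint mn).const_mul (C1 mn))]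
    simp_rw [integral_const_mul]
    simp [hφzero]
  have hE2 : ∫ ω, T2 ω ∂μ = 0 := by
    simp_rw [h2]
    rw [integral_finset_sum _ (fun mn _ => (hφint mn).const_mul (C2 mn))]
    simp_rw [integral_const_mul]
    simp [hφzero]
  have hpt : ∀ ω, T1 ω * T2 ω = ∑ mn : Fin N × Fin N, ∑ mn' : Fin N × Fin N,
      (C1 mn * C2 mn') * ((u ω mn.1 * u ω mn.2 - Dd mn.1 mn.2)
        * (u ω mn'.1 * u ω mn'.2 - Dd mn'.1 mn'.2)) := by
    intro ω
    rw [h1 ω, h2 ω, Finset.sum_mul_sum]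
    refine Finset.sum_congr rfl fun mn _ => Finset.sum_congr rfl fun mn' _ => by ring
  have hEprod : ∫ ω, T1 ω * T2 ω ∂μ
      = ∑ mn : Fin N × Fin N, ∑ mn' : Fin N × Fin N, C1 mn * C2 mn'
          * (Dd mn.1 mn'.1 * Dd mn.2 mn'.2 + Dd mn.1 mn'.2 * Dd mn.2 mn'.1) := by
    simp_rw [hpt]
    rw [integral_finset_sum _ (fun mn _ =>
      integrable_finset_sum _ (fun mn' _ => (hφφint mn mn').const_mul _))]
    refine Finset.sum_congr rfl fun mn _ => ?_
    rw [integral_finset_sum _ (fun mn' _ => (hφφint mn mn').const_mul _)]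
    refine Finset.sum_congr rfl fun mn' _ => ?_
    rw [integral_const_mul, hφφval]
  rw [hEprod, hE1, hE2, mul_zero, sub_zero]
  have hsplit : ∀ mn : Fin N × Fin N, ∑ mn' : Fin N × Fin N, C1 mn * C2 mn'
      * (Dd mn.1 mn'.1 * Dd mn.2 mn'.2 + Dd mn.1 mn'.2 * Dd mn.2 mn'.1)
      = C1 mn * C2 mn + C1 mn * C2 (mn.2, mn.1) := by
    intro mn
    have e1 : ∑ mn' : Fin N × Fin N, C2 mn' * (Dd mn.1 mn'.1 * Dd mn.2 mn'.2) = C2 mn := by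
      rw [sum_delta_pair C2 mn.1 mn.2]
    have e2 : ∑ mn' : Fin N × Fin N, C2 mn' * (Dd mn.1 mn'.2 * Dd mn.2 mn'.1)
        = C2 (mn.2, mn.1) := by
      rw [sum_delta_pair' C2 mn.1 mn.2]
    calc ∑ mn' : Fin N × Fin N, C1 mn * C2 mn'
          * (Dd mn.1 mn'.1 * Dd mn.2 mn'.2 + Dd mn.1 mn'.2 * Dd mn.2 mn'.1)
        = ∑ mn' : Fin N × Fin N, (C1 mn * (C2 mn' * (Dd mn.1 mn'.1 * Dd mn.2 mn'.2))
            + C1 mn * (C2 mn' * (Dd mn.1 mn'.2 * Dd mn.2 mn'.1))) := by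
          refine Finset.sum_congr rfl fun mn' _ => by ring
      _ = C1 mn * (∑ mn' : Fin N × Fin N, C2 mn' * (Dd mn.1 mn'.1 * Dd mn.2 mn'.2))
            + C1 mn * (∑ mn' : Fin N × Fin N, C2 mn' * (Dd mn.1 mn'.2 * Dd mn.2 mn'.1)) := by
          rw [Finset.sum_add_distrib, ← Finset.mul_sum, ← Finset.mul_sum]
      _ = C1 mn * C2 mn + C1 mn * C2 (mn.2, mn.1) := by rw [e1, e2]
  simp_rw [hsplit]
  rw [Finset.sum_add_distrib]

end Part4
section Part5

open Matrix

lemma swap23 {α β γ : Type*} [Fintype α] [Fintype β] [Fintype γ] (f : α → β → γ → ℝ) :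
    ∑ a, ∑ b, ∑ c, f a b c = ∑ a, ∑ c, ∑ b, f a b c :=
  Finset.sum_congr rfl fun a _ => Finset.sum_comm

lemma swap34 {α β γ δ : Type*} [Fintype α] [Fintype β] [Fintype γ] [Fintype δ]
    (f : α → β → γ → δ → ℝ) :
    ∑ a, ∑ b, ∑ c, ∑ d, f a b c d = ∑ a, ∑ b, ∑ d, ∑ c, f a b c d :=
  Finset.sum_congr rfl fun a _ => Finset.sum_congr rfl fun b _ => Finset.sum_comm

lemma mulBt_entry {nn q1 q2 l1 l2 : ℕ} (A : Fin l1 → Matrix (Fin q1) (Fin nn) ℝ)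
    (B : Fin l2 → Matrix (Fin q2) (Fin nn) ℝ) (i : Fin l1) (j : Fin l2)
    (p : Fin q1) (s : Fin q2) :
    (A i * (B j)ᵀ) p s = ∑ m, A i p m * B j s m := by
  rw [Matrix.mul_apply]
  exact Finset.sum_congr rfl fun m _ => by rw [Matrix.transpose_apply]

lemma coef_prod_sum {nn q1 q2 l1 l2 : ℕ} (A : Fin l1 → Matrix (Fin q1) (Fin nn) ℝ)
    (B : Fin l2 → Matrix (Fin q2) (Fin nn) ℝ) (p r : Fin q1) (s t : Fin q2) :
    ∑ mn : Fin nn × Fin nn,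
      (∑ i, A i p mn.1 * A i r mn.2) * (∑ j, B j s mn.1 * B j t mn.2)
    = ∑ i, ∑ j, (A i * (B j)ᵀ) p s * (A i * (B j)ᵀ) r t := by
  rw [Fintype.sum_prod_type]
  simp_rw [Finset.sum_mul_sum]
  rw [swap23 (fun (m : Fin nn) (c : Fin nn) (i : Fin l1) =>
    ∑ j, (A i p m * A i r c) * (B j s m * B j t c))]
  rw [Finset.sum_comm]
  rw [swap34 (fun (i : Fin l1) (m : Fin nn) (c : Fin nn) (j : Fin l2) =>
    (A i p m * A i r c) * (B j s m * B j t c))]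
  rw [swap23 (fun (i : Fin l1) (m : Fin nn) (j : Fin l2) =>
    ∑ c, (A i p m * A i r c) * (B j s m * B j t c))]
  refine Finset.sum_congr rfl fun i _ => Finset.sum_congr rfl fun j _ => ?_
  rw [mulBt_entry A B i j p s, mulBt_entry A B i j r t, Finset.sum_mul_sum]
  exact Finset.sum_congr rfl fun m _ => Finset.sum_congr rfl fun c _ => by ring

lemma coef_prod_sum' {nn q1 q2 l1 l2 : ℕ} (A : Fin l1 → Matrix (Fin q1) (Fin nn) ℝ)
    (B : Fin l2 → Matrix (Fin q2) (Fin nn) ℝ) (p r : Fin q1) (s t : Fin q2) :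
    ∑ mn : Fin nn × Fin nn,
      (∑ i, A i p mn.1 * A i r mn.2) * (∑ j, B j s mn.2 * B j t mn.1)
    = ∑ i, ∑ j, (A i * (B j)ᵀ) p t * (A i * (B j)ᵀ) r s := by
  rw [Fintype.sum_prod_type]
  simp_rw [Finset.sum_mul_sum]
  rw [swap23 (fun (m : Fin nn) (c : Fin nn) (i : Fin l1) =>
    ∑ j, (A i p m * A i r c) * (B j s c * B j t m))]
  rw [Finset.sum_comm]
  rw [swap34 (fun (i : Fin l1) (m : Fin nn) (c : Fin nn) (j : Fin l2) =>
    (A i p m * A i r c) * (B j s c * B j t m))]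
  rw [swap23 (fun (i : Fin l1) (m : Fin nn) (j : Fin l2) =>
    ∑ c, (A i p m * A i r c) * (B j s c * B j t m))]
  refine Finset.sum_congr rfl fun i _ => Finset.sum_congr rfl fun j _ => ?_
  rw [mulBt_entry A B i j p t, mulBt_entry A B i j r s, Finset.sum_mul_sum]
  exact Finset.sum_congr rfl fun m _ => Finset.sum_congr rfl fun c _ => by ring

lemma dup_swap (qk : ℕ) (v : Fin qk × Fin qk) (a : VechIdx qk) :
    dup qk (v.2, v.1) a = dup qk v a := by
  unfold dup
  refine if_congr ?_ rfl rfl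
  constructor
  · rintro (⟨h1, h2⟩ | ⟨h1, h2⟩)
    · exact Or.inr ⟨h2, h1⟩
    · exact Or.inl ⟨h2, h1⟩
  · rintro (⟨h1, h2⟩ | ⟨h1, h2⟩)
    · exact Or.inr ⟨h2, h1⟩
    · exact Or.inl ⟨h2, h1⟩

lemma double_coef_sum {nn q1 q2 l1 l2 : ℕ} (A : Fin l1 → Matrix (Fin q1) (Fin nn) ℝ)
    (B : Fin l2 → Matrix (Fin q2) (Fin nn) ℝ) (D1 : Fin q1 × Fin q1 → ℝ)
    (D2 : Fin q2 × Fin q2 → ℝ) :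
    ∑ mn : Fin nn × Fin nn,
      (∑ v : Fin q1 × Fin q1, D1 v * ((1/2 : ℝ) * ∑ i, A i v.2 mn.1 * A i v.1 mn.2))
      * (∑ w : Fin q2 × Fin q2, D2 w * ((1/2 : ℝ) * ∑ j, B j w.2 mn.1 * B j w.1 mn.2))
    = ∑ v : Fin q1 × Fin q1, ∑ w : Fin q2 × Fin q2, D1 v * D2 w * ((1/4 : ℝ) * ∑ i, ∑ j,
        (A i * (B j)ᵀ) v.2 w.2 * (A i * (B j)ᵀ) v.1 w.1) := by
  simp_rw [Finset.sum_mul_sum]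
  rw [Finset.sum_comm]
  rw [swap23 (fun (v : Fin q1 × Fin q1) (mn : Fin nn × Fin nn) (w : Fin q2 × Fin q2) =>
    (D1 v * ((1/2 : ℝ) * ∑ i, A i v.2 mn.1 * A i v.1 mn.2))
      * (D2 w * ((1/2 : ℝ) * ∑ j, B j w.2 mn.1 * B j w.1 mn.2)))]
  refine Finset.sum_congr rfl fun v _ => Finset.sum_congr rfl fun w _ => ?_
  have step : ∀ mn : Fin nn × Fin nn,
      (D1 v * ((1/2 : ℝ) * ∑ i, A i v.2 mn.1 * A i v.1 mn.2))
      * (D2 w * ((1/2 : ℝ) * ∑ j, B j w.2 mn.1 * B j w.1 mn.2))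
      = (D1 v * D2 w * (1/4 : ℝ))
        * ((∑ i, A i v.2 mn.1 * A i v.1 mn.2) * (∑ j, B j w.2 mn.1 * B j w.1 mn.2)) := by
    intro mn; ring
  simp_rw [step]
  rw [← Finset.mul_sum, coef_prod_sum A B v.2 v.1 w.2 w.1]
  ring

lemma double_coef_sum' {nn q1 q2 l1 l2 : ℕ} (A : Fin l1 → Matrix (Fin q1) (Fin nn) ℝ)
    (B : Fin l2 → Matrix (Fin q2) (Fin nn) ℝ) (D1 : Fin q1 × Fin q1 → ℝ)
    (D2 : Fin q2 × Fin q2 → ℝ) :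
    ∑ mn : Fin nn × Fin nn,
      (∑ v : Fin q1 × Fin q1, D1 v * ((1/2 : ℝ) * ∑ i, A i v.2 mn.1 * A i v.1 mn.2))
      * (∑ w : Fin q2 × Fin q2, D2 w * ((1/2 : ℝ) * ∑ j, B j w.2 mn.2 * B j w.1 mn.1))
    = ∑ v : Fin q1 × Fin q1, ∑ w : Fin q2 × Fin q2, D1 v * D2 w * ((1/4 : ℝ) * ∑ i, ∑ j,
        (A i * (B j)ᵀ) v.2 w.1 * (A i * (B j)ᵀ) v.1 w.2) := by
  simp_rw [Finset.sum_mul_sum]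
  rw [Finset.sum_comm]
  rw [swap23 (fun (v : Fin q1 × Fin q1) (mn : Fin nn × Fin nn) (w : Fin q2 × Fin q2) =>
    (D1 v * ((1/2 : ℝ) * ∑ i, A i v.2 mn.1 * A i v.1 mn.2))
      * (D2 w * ((1/2 : ℝ) * ∑ j, B j w.2 mn.2 * B j w.1 mn.1)))]
  refine Finset.sum_congr rfl fun v _ => Finset.sum_congr rfl fun w _ => ?_
  have step : ∀ mn : Fin nn × Fin nn,
      (D1 v * ((1/2 : ℝ) * ∑ i, A i v.2 mn.1 * A i v.1 mn.2))
      * (D2 w * ((1/2 : ℝ) * ∑ j, B j w.2 mn.2 * B j w.1 mn.1))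
      = (D1 v * D2 w * (1/4 : ℝ))
        * ((∑ i, A i v.2 mn.1 * A i v.1 mn.2) * (∑ j, B j w.2 mn.2 * B j w.1 mn.1)) := by
    intro mn; ring
  simp_rw [step]
  rw [← Finset.mul_sum, coef_prod_sum' A B v.2 v.1 w.2 w.1]
  ring

end Part5

section Part6

open Matrix MeasureTheory ProbabilityTheory

lemma vecMulVec_mulVec_eq {nn : ℕ} (R : Matrix (Fin nn) (Fin nn) ℝ) (x : Fin nn → ℝ) :
    vecMulVec (R *ᵥ x) (R *ᵥ x) = R * vecMulVec x x * Rᵀ := by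
  ext i j
  simp only [Matrix.vecMulVec_apply, Matrix.mul_apply, Matrix.transpose_apply,
    Matrix.mulVec, dotProduct]
  rw [Finset.sum_mul_sum]
  rw [Finset.sum_comm]
  refine Finset.sum_congr rfl fun d _ => ?_
  rw [Finset.sum_mul]
  exact Finset.sum_congr rfl fun c _ => by ring

lemma score_repr {nn qk lk : ℕ} (A : Fin lk → Matrix (Fin qk) (Fin nn) ℝ)
    (W : Matrix (Fin nn) (Fin nn) ℝ) (v : Fin qk × Fin qk) :
    (∑ i, A i * W * (A i)ᵀ) v.2 v.1
      = ∑ mn : Fin nn × Fin nn, (∑ i, A i v.2 mn.1 * A i v.1 mn.2) * W mn.1 mn.2 := by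
  rw [Matrix.sum_apply]
  have h : ∀ i : Fin lk, (A i * W * (A i)ᵀ) v.2 v.1
      = ∑ mn : Fin nn × Fin nn, A i v.2 mn.1 * A i v.1 mn.2 * W mn.1 mn.2 := by
    intro i
    rw [Fintype.sum_prod_type, Matrix.mul_apply]
    calc ∑ c, (A i * W) v.2 c * (A i)ᵀ c v.1
        = ∑ c, ∑ m, A i v.2 m * W m c * A i v.1 c := by
          refine Finset.sum_congr rfl fun c _ => ?_
          rw [Matrix.mul_apply, Matrix.transpose_apply, Finset.sum_mul]
      _ = ∑ m, ∑ c, A i v.2 m * W m c * A i v.1 c := Finset.sum_comm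
      _ = ∑ m, ∑ c, A i v.2 m * A i v.1 c * W m c :=
          Finset.sum_congr rfl fun m _ => Finset.sum_congr rfl fun c _ => by ring
  simp_rw [h]
  rw [Finset.sum_comm]
  refine Finset.sum_congr rfl fun mn _ => ?_
  rw [Finset.sum_mul]

end Part6


/-- In the multi-factor LMM, with `e = σ R u` for `u` a vector of i.i.d.
standard normals, the cross-covariance matrix between the half-vectorized scores
`𝒟_{q_{k₁}}ᵀ s_{k₁}` and `𝒟_{q_{k₂}}ᵀ s_{k₂}` equals
`(1/2) 𝒟_{q_{k₁}}ᵀ [ ∑_i ∑_j (Z_{(k₁,i)}ᵀ V⁻¹ Z_{(k₂,j)}) ⊗ (Z_{(k₁,i)}ᵀ V⁻¹ Z_{(k₂,j)}) ] 𝒟_{q_{k₂}}`. -/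
theorem stmt7 {Ω : Type*} [MeasurableSpace Ω] (μ : Measure Ω) [IsProbabilityMeasure μ]
    (n p r : ℕ) (hn : 0 < n) (hp : 0 < p) (σ : ℝ) (hσ : 0 < σ)
    (V R : Matrix (Fin n) (Fin n) ℝ) (hVpd : V.PosDef) (hR : R * Rᵀ = V)
    (l q : Fin r → ℕ)
    (Z : (k : Fin r) → Fin (l k) → Matrix (Fin n) (Fin (q k)) ℝ)
    (u : Ω → Fin n → ℝ)
    (humeas : ∀ i, Measurable fun ω => u ω i)
    (huindep : iIndepFun (fun i ω => u ω i) μ)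
    (hulaw : ∀ i, Measure.map (fun ω => u ω i) μ = gaussianReal 0 1)
    (e : Ω → Fin n → ℝ) (he : ∀ ω, e ω = σ • (R *ᵥ u ω))
    (s : (k : Fin r) → Ω → (Fin (q k) × Fin (q k)) → ℝ)
    (hs : ∀ k ω idx, s k ω idx =
      ((1 / 2 : ℝ) •
        ∑ j, (Z k j)ᵀ * V⁻¹ * ((σ ^ 2)⁻¹ • vecMulVec (e ω) (e ω) - V) * V⁻¹ * Z k j)
        idx.2 idx.1)
    (t : (k : Fin r) → Ω → VechIdx (q k) → ℝ)
    (ht : ∀ k ω, t k ω = (dup (q k))ᵀ.mulVec (s k ω)) :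
    ∀ (k₁ k₂ : Fin r) (a : VechIdx (q k₁)) (b : VechIdx (q k₂)),
      (∫ ω, t k₁ ω a * t k₂ ω b ∂μ) - (∫ ω, t k₁ ω a ∂μ) * (∫ ω, t k₂ ω b ∂μ) =
        ((1 / 2 : ℝ) • ((dup (q k₁))ᵀ *
          (∑ i, ∑ j, kroneckerMap (· * ·) ((Z k₁ i)ᵀ * V⁻¹ * Z k₂ j)
            ((Z k₁ i)ᵀ * V⁻¹ * Z k₂ j)) * dup (q k₂))) a b := by
  
  intro k₁ k₂ a b
  classical
  -- basic matrix facts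
  have hVdet : IsUnit V.det := isUnit_iff_ne_zero.2 (ne_of_gt hVpd.det_pos)
  have hVsymm : Vᵀ = V := hVpd.isHermitian.eq
  have hVinvT : V⁻¹ᵀ = V⁻¹ := by rw [Matrix.transpose_nonsing_inv, hVsymm]
  have hVinvVVinv : V⁻¹ * V * V⁻¹ = V⁻¹ := by rw [Matrix.nonsing_inv_mul V hVdet, one_mul]
  have hG : ∀ (i : Fin (l k₁)) (j : Fin (l k₂)),
      (Z k₁ i)ᵀ * V⁻¹ * Z k₂ j
        = ((Z k₁ i)ᵀ * V⁻¹ * R) * ((Z k₂ j)ᵀ * V⁻¹ * R)ᵀ := by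
    intro i j
    rw [Matrix.transpose_mul, Matrix.transpose_mul, Matrix.transpose_transpose, hVinvT]
    have hh : (Z k₁ i)ᵀ * V⁻¹ * R * (Rᵀ * (V⁻¹ * Z k₂ j))
        = (Z k₁ i)ᵀ * (V⁻¹ * (R * Rᵀ) * V⁻¹) * Z k₂ j := by
      simp only [Matrix.mul_assoc]
    rw [hh, hR, hVinvVVinv]
  -- the standardized residual matrix
  have hWmat : ∀ ω, (σ ^ 2)⁻¹ • vecMulVec (e ω) (e ω) - V
      = R * (vecMulVec (u ω) (u ω) - 1) * Rᵀ := by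
    intro ω
    have h1 : vecMulVec (e ω) (e ω) = (σ ^ 2) • (R * vecMulVec (u ω) (u ω) * Rᵀ) := by
      rw [he ω, ← vecMulVec_mulVec_eq]
      ext i j
      simp only [Matrix.vecMulVec_apply, Pi.smul_apply, smul_eq_mul, Matrix.smul_apply]
      ring
    rw [h1, smul_smul, inv_mul_cancel₀ (pow_ne_zero 2 (ne_of_gt hσ)), one_smul,
      Matrix.mul_sub, Matrix.mul_one, Matrix.sub_mul, hR]
  -- representation of the score
  have hsrep : ∀ (k : Fin r) (ω : Ω) (v : Fin (q k) × Fin (q k)), s k ω v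
      = ∑ mn : Fin n × Fin n,
          ((1/2 : ℝ) * ∑ i, ((Z k i)ᵀ * V⁻¹ * R) v.2 mn.1 * ((Z k i)ᵀ * V⁻¹ * R) v.1 mn.2)
          * (u ω mn.1 * u ω mn.2 - Dd mn.1 mn.2) := by
    intro k ω v
    rw [hs k ω v]
    have hmat : (∑ j, (Z k j)ᵀ * V⁻¹ * ((σ ^ 2)⁻¹ • vecMulVec (e ω) (e ω) - V) * V⁻¹ * Z k j)
        = ∑ j, ((Z k j)ᵀ * V⁻¹ * R) * (vecMulVec (u ω) (u ω) - 1)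
            * ((Z k j)ᵀ * V⁻¹ * R)ᵀ := by
      refine Finset.sum_congr rfl fun j _ => ?_
      rw [hWmat ω, Matrix.transpose_mul, Matrix.transpose_mul, Matrix.transpose_transpose,
        hVinvT]
      simp only [Matrix.mul_assoc]
    rw [hmat, Matrix.smul_apply, smul_eq_mul]
    have hsc : ((∑ i, ((Z k i)ᵀ * V⁻¹ * R) * (vecMulVec (u ω) (u ω) - 1)
          * (((Z k i)ᵀ * V⁻¹ * R))ᵀ : Matrix (Fin (q k)) (Fin (q k)) ℝ)) v.2 v.1
        = ∑ mn : Fin n × Fin n, (∑ i, ((Z k i)ᵀ * V⁻¹ * R) v.2 mn.1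
            * ((Z k i)ᵀ * V⁻¹ * R) v.1 mn.2) * (vecMulVec (u ω) (u ω) - 1) mn.1 mn.2 :=
      score_repr (fun i => (Z k i)ᵀ * V⁻¹ * R) (vecMulVec (u ω) (u ω) - 1) v
    rw [hsc, Finset.mul_sum]
    refine Finset.sum_congr rfl fun mn _ => ?_
    have hW : (vecMulVec (u ω) (u ω) - 1) mn.1 mn.2
        = u ω mn.1 * u ω mn.2 - Dd mn.1 mn.2 := by
      simp [Matrix.sub_apply, Matrix.vecMulVec_apply, Matrix.one_apply, Dd]
    rw [hW]; ring
  -- representation of t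
  have htrep : ∀ (k : Fin r) (cIdx : VechIdx (q k)) (ω : Ω), t k ω cIdx
      = ∑ mn : Fin n × Fin n,
          (∑ v : Fin (q k) × Fin (q k), dup (q k) v cIdx
            * ((1/2 : ℝ) * ∑ i, ((Z k i)ᵀ * V⁻¹ * R) v.2 mn.1
                * ((Z k i)ᵀ * V⁻¹ * R) v.1 mn.2))
          * (u ω mn.1 * u ω mn.2 - Dd mn.1 mn.2) := by
    intro k cIdx ω
    have h0 : t k ω cIdx = ∑ v : Fin (q k) × Fin (q k), dup (q k) v cIdx * s k ω v := by
      rw [ht k ω]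
      simp only [Matrix.mulVec, dotProduct, Matrix.transpose_apply]
    rw [h0]
    calc ∑ v : Fin (q k) × Fin (q k), dup (q k) v cIdx * s k ω v
        = ∑ v : Fin (q k) × Fin (q k), ∑ mn : Fin n × Fin n,
            (dup (q k) v cIdx * ((1/2 : ℝ) * ∑ i, ((Z k i)ᵀ * V⁻¹ * R) v.2 mn.1
              * ((Z k i)ᵀ * V⁻¹ * R) v.1 mn.2))
            * (u ω mn.1 * u ω mn.2 - Dd mn.1 mn.2) := by
          refine Finset.sum_congr rfl fun v _ => ?_
          rw [hsrep k ω v, Finset.mul_sum]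
          exact Finset.sum_congr rfl fun mn _ => by ring
      _ = ∑ mn : Fin n × Fin n, ∑ v : Fin (q k) × Fin (q k),
            (dup (q k) v cIdx * ((1/2 : ℝ) * ∑ i, ((Z k i)ᵀ * V⁻¹ * R) v.2 mn.1
              * ((Z k i)ᵀ * V⁻¹ * R) v.1 mn.2))
            * (u ω mn.1 * u ω mn.2 - Dd mn.1 mn.2) := Finset.sum_comm
      _ = ∑ mn : Fin n × Fin n,
            (∑ v : Fin (q k) × Fin (q k), dup (q k) v cIdx
              * ((1/2 : ℝ) * ∑ i, ((Z k i)ᵀ * V⁻¹ * R) v.2 mn.1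
                  * ((Z k i)ᵀ * V⁻¹ * R) v.1 mn.2))
            * (u ω mn.1 * u ω mn.2 - Dd mn.1 mn.2) := by
          refine Finset.sum_congr rfl fun mn _ => ?_
          rw [Finset.sum_mul]
  -- covariance via the representation
  have hcov : (∫ ω, t k₁ ω a * t k₂ ω b ∂μ)
        - (∫ ω, t k₁ ω a ∂μ) * (∫ ω, t k₂ ω b ∂μ)
      = (∑ mn : Fin n × Fin n,
          (∑ v : Fin (q k₁) × Fin (q k₁), dup (q k₁) v a
            * ((1/2 : ℝ) * ∑ i, ((Z k₁ i)ᵀ * V⁻¹ * R) v.2 mn.1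
                * ((Z k₁ i)ᵀ * V⁻¹ * R) v.1 mn.2))
          * (∑ w : Fin (q k₂) × Fin (q k₂), dup (q k₂) w b
            * ((1/2 : ℝ) * ∑ j, ((Z k₂ j)ᵀ * V⁻¹ * R) w.2 mn.1
                * ((Z k₂ j)ᵀ * V⁻¹ * R) w.1 mn.2)))
        + (∑ mn : Fin n × Fin n,
          (∑ v : Fin (q k₁) × Fin (q k₁), dup (q k₁) v a
            * ((1/2 : ℝ) * ∑ i, ((Z k₁ i)ᵀ * V⁻¹ * R) v.2 mn.1
                * ((Z k₁ i)ᵀ * V⁻¹ * R) v.1 mn.2))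
          * (∑ w : Fin (q k₂) × Fin (q k₂), dup (q k₂) w b
            * ((1/2 : ℝ) * ∑ j, ((Z k₂ j)ᵀ * V⁻¹ * R) w.2 mn.2
                * ((Z k₂ j)ᵀ * V⁻¹ * R) w.1 mn.1))) :=
    cov_of_repr μ humeas huindep hulaw _ _ _ _ (htrep k₁ a) (htrep k₂ b)
  rw [hcov]
  -- collapse the two quadratic sums
  have hS1 := double_coef_sum (fun i => (Z k₁ i)ᵀ * V⁻¹ * R) (fun j => (Z k₂ j)ᵀ * V⁻¹ * R)
    (fun v => dup (q k₁) v a) (fun w => dup (q k₂) w b)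
  have hS2 := double_coef_sum' (fun i => (Z k₁ i)ᵀ * V⁻¹ * R) (fun j => (Z k₂ j)ᵀ * V⁻¹ * R)
    (fun v => dup (q k₁) v a) (fun w => dup (q k₂) w b)
  rw [hS1, hS2]
  -- swap the second sum
  have hswap : (∑ v : Fin (q k₁) × Fin (q k₁), ∑ w : Fin (q k₂) × Fin (q k₂),
        dup (q k₁) v a * dup (q k₂) w b * ((1/4 : ℝ) * ∑ i, ∑ j,
          (((Z k₁ i)ᵀ * V⁻¹ * R) * ((Z k₂ j)ᵀ * V⁻¹ * R)ᵀ) v.2 w.1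
          * (((Z k₁ i)ᵀ * V⁻¹ * R) * ((Z k₂ j)ᵀ * V⁻¹ * R)ᵀ) v.1 w.2))
      = ∑ v : Fin (q k₁) × Fin (q k₁), ∑ w : Fin (q k₂) × Fin (q k₂),
        dup (q k₁) v a * dup (q k₂) w b * ((1/4 : ℝ) * ∑ i, ∑ j,
          (((Z k₁ i)ᵀ * V⁻¹ * R) * ((Z k₂ j)ᵀ * V⁻¹ * R)ᵀ) v.2 w.2
          * (((Z k₁ i)ᵀ * V⁻¹ * R) * ((Z k₂ j)ᵀ * V⁻¹ * R)ᵀ) v.1 w.1) := by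
    refine Finset.sum_congr rfl fun v _ => ?_
    refine Fintype.sum_equiv (Equiv.prodComm (Fin (q k₂)) (Fin (q k₂))) _ _ ?_
    intro w
    simp only [Equiv.prodComm_apply, Prod.fst_swap, Prod.snd_swap, Prod.swap]
    rw [dup_swap (q k₂) w b]
  rw [hswap]
  rw [← Finset.sum_add_distrib]
  -- unfold the right-hand side
  have hRHS : ((1 / 2 : ℝ) • ((dup (q k₁))ᵀ *
        (∑ i, ∑ j, kroneckerMap (· * ·) ((Z k₁ i)ᵀ * V⁻¹ * Z k₂ j)
          ((Z k₁ i)ᵀ * V⁻¹ * Z k₂ j)) * dup (q k₂))) a b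
      = (1/2 : ℝ) * ∑ w : Fin (q k₂) × Fin (q k₂),
          (∑ v : Fin (q k₁) × Fin (q k₁), dup (q k₁) v a * (∑ i, ∑ j,
            (((Z k₁ i)ᵀ * V⁻¹ * R) * ((Z k₂ j)ᵀ * V⁻¹ * R)ᵀ) v.1 w.1
            * (((Z k₁ i)ᵀ * V⁻¹ * R) * ((Z k₂ j)ᵀ * V⁻¹ * R)ᵀ) v.2 w.2)) * dup (q k₂) w b := by
    simp only [hG]
    rw [Matrix.smul_apply, smul_eq_mul]
    congr 1
    rw [Matrix.mul_apply]
    refine Finset.sum_congr rfl fun w _ => ?_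
    congr 1
    rw [Matrix.mul_apply]
    refine Finset.sum_congr rfl fun v _ => ?_
    congr 1
    simp only [Matrix.sum_apply, Matrix.kroneckerMap_apply]
  rw [hRHS]
  -- final algebra
  calc ∑ v : Fin (q k₁) × Fin (q k₁),
        ((∑ w : Fin (q k₂) × Fin (q k₂), dup (q k₁) v a * dup (q k₂) w b * ((1/4 : ℝ) * ∑ i, ∑ j,
          (((Z k₁ i)ᵀ * V⁻¹ * R) * ((Z k₂ j)ᵀ * V⁻¹ * R)ᵀ) v.2 w.2
          * (((Z k₁ i)ᵀ * V⁻¹ * R) * ((Z k₂ j)ᵀ * V⁻¹ * R)ᵀ) v.1 w.1))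
        + (∑ w : Fin (q k₂) × Fin (q k₂), dup (q k₁) v a * dup (q k₂) w b * ((1/4 : ℝ) * ∑ i, ∑ j,
          (((Z k₁ i)ᵀ * V⁻¹ * R) * ((Z k₂ j)ᵀ * V⁻¹ * R)ᵀ) v.2 w.2
          * (((Z k₁ i)ᵀ * V⁻¹ * R) * ((Z k₂ j)ᵀ * V⁻¹ * R)ᵀ) v.1 w.1)))
      = ∑ v : Fin (q k₁) × Fin (q k₁), ∑ w : Fin (q k₂) × Fin (q k₂),
          dup (q k₁) v a * dup (q k₂) w b * ((1/2 : ℝ) * ∑ i, ∑ j,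
            (((Z k₁ i)ᵀ * V⁻¹ * R) * ((Z k₂ j)ᵀ * V⁻¹ * R)ᵀ) v.1 w.1
            * (((Z k₁ i)ᵀ * V⁻¹ * R) * ((Z k₂ j)ᵀ * V⁻¹ * R)ᵀ) v.2 w.2) := by
        refine Finset.sum_congr rfl fun v _ => ?_
        rw [← Finset.sum_add_distrib]
        refine Finset.sum_congr rfl fun w _ => ?_
        have hxx : ∑ i, ∑ j,
              (((Z k₁ i)ᵀ * V⁻¹ * R) * ((Z k₂ j)ᵀ * V⁻¹ * R)ᵀ) v.2 w.2
              * (((Z k₁ i)ᵀ * V⁻¹ * R) * ((Z k₂ j)ᵀ * V⁻¹ * R)ᵀ) v.1 w.1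
            = ∑ i, ∑ j,
              (((Z k₁ i)ᵀ * V⁻¹ * R) * ((Z k₂ j)ᵀ * V⁻¹ * R)ᵀ) v.1 w.1
              * (((Z k₁ i)ᵀ * V⁻¹ * R) * ((Z k₂ j)ᵀ * V⁻¹ * R)ᵀ) v.2 w.2 :=
          Finset.sum_congr rfl fun i _ => Finset.sum_congr rfl fun j _ => by ring
        rw [hxx]
        ring
    _ = ∑ w : Fin (q k₂) × Fin (q k₂), ∑ v : Fin (q k₁) × Fin (q k₁),
          dup (q k₁) v a * dup (q k₂) w b * ((1/2 : ℝ) * ∑ i, ∑ j,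
            (((Z k₁ i)ᵀ * V⁻¹ * R) * ((Z k₂ j)ᵀ * V⁻¹ * R)ᵀ) v.1 w.1
            * (((Z k₁ i)ᵀ * V⁻¹ * R) * ((Z k₂ j)ᵀ * V⁻¹ * R)ᵀ) v.2 w.2) := Finset.sum_comm
    _ = (1/2 : ℝ) * ∑ w : Fin (q k₂) × Fin (q k₂),
          (∑ v : Fin (q k₁) × Fin (q k₁), dup (q k₁) v a * (∑ i, ∑ j,
            (((Z k₁ i)ᵀ * V⁻¹ * R) * ((Z k₂ j)ᵀ * V⁻¹ * R)ᵀ) v.1 w.1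
            * (((Z k₁ i)ᵀ * V⁻¹ * R) * ((Z k₂ j)ᵀ * V⁻¹ * R)ᵀ) v.2 w.2)) * dup (q k₂) w b := by
        rw [Finset.mul_sum]
        refine Finset.sum_congr rfl fun w _ => ?_
        rw [Finset.sum_mul, Finset.mul_sum]
        exact Finset.sum_congr rfl fun v _ => by ring
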